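/- Let ℓ be a prime number, K a number field, v a nonzero prime ideal of O_K dividing ℓO_K, and e = ord_v(ℓO_K) the exponent of v in the factorization of ℓO_K. Let m be a positive integer with m(ℓ − 1) > eℓ. If α, a ∈ O_K are such that a ∉ v and α ≡ a^ℓ (mod v^m), then α is an ℓ-th power in the v-adic completion K_v of K, i.e. there exists x ∈ K_v with x^ℓ = α. -/

import Mathlib

open NumberField IsDedekindDomain
open Multiplicative Finset
open scoped WithZero

local notation "ℤₘ₀" => ℤᵐ⁰

local notation "γ" a => ((ofAdd (a : ℤ) : Multiplicative ℤ) : ℤₘ₀)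

private lemma gle {a b : ℤ} (h : a ≤ b) : (γ a) ≤ (γ b) :=
  WithZero.coe_le_coe.mpr (Multiplicative.ofAdd_le.mpr h)

private lemma vnat {F : Type*} [Field F] [Valued F ℤₘ₀] (n : ℕ) : Valued.v (n : F) ≤ 1 := by
  induction n with
  | zero => simp
  | succ k ih => push_cast; exact le_trans (Valued.v.map_add _ _) (max_le ih (le_of_eq Valued.v.map_one))

noncomputable def newton {F : Type*} [Field F] (ℓ : ℕ) (A x : F) : F :=
  x + (A - x ^ ℓ) / ((ℓ : F) * x ^ (ℓ - 1))

theorem step_aux {F : Type*} [Field F] [Valued F ℤₘ₀] {ℓ e : ℕ} (hℓ : ℓ.Prime)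
    (hw : Valued.v (ℓ : F) = (γ (-(e:ℤ)))) (A : F)
    {m' : ℕ} (hm' : e * ℓ < m' * (ℓ - 1)) {x : F} (hx : Valued.v x = 1)
    (hfx : Valued.v (x ^ ℓ - A) ≤ (γ (-(m':ℤ)))) :
    Valued.v (newton ℓ A x - x) ≤ (γ ((e:ℤ) - m')) ∧ Valued.v (newton ℓ A x) = 1 ∧
      Valued.v (newton ℓ A x ^ ℓ - A) ≤ (γ (-((m':ℤ) + 1))) := by
  have hl2 : 2 ≤ ℓ := hℓ.two_le
  -- integer inequalities
  have hzm : (e : ℤ) * ℓ < m' * (ℓ - 1) := by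
    have := Int.ofNat_lt.mpr hm'
    push_cast [Nat.cast_sub (le_trans one_le_two hl2)] at this ⊢
    exact_mod_cast this
  have hem : (e : ℤ) < m' := by nlinarith [hzm, (by exact_mod_cast hl2 : (2:ℤ) ≤ ℓ)]
  have f1 : (m' : ℤ) + 1 ≤ ℓ * ((m' : ℤ) - e) := by nlinarith [hzm]
  have f2 : (m' : ℤ) + 1 ≤ 2 * m' - e := by linarith
  -- nonvanishing
  have hx0 : x ≠ 0 := by
    intro h; rw [h, Valued.v.map_zero] at hx; exact zero_ne_one hx
  have hl0 : (ℓ : F) ≠ 0 := by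
    intro h; rw [h, Valued.v.map_zero] at hw; exact WithZero.zero_ne_coe hw
  set D : F := (ℓ : F) * x ^ (ℓ - 1) with hD
  have hD0 : D ≠ 0 := mul_ne_zero hl0 (pow_ne_zero _ hx0)
  have hvD : Valued.v D = (γ (-(e:ℤ))) := by
    rw [hD, Valued.v.map_mul, Valued.v.map_pow, hx, one_pow, mul_one, hw]
  set t : F := (A - x ^ ℓ) / D with ht
  have hnewt : newton ℓ A x = x + t := rfl
  have hvt : Valued.v t ≤ (γ ((e:ℤ) - m')) := by
    rw [ht, map_div₀, hvD, Valued.v.map_sub_swap]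
    rw [div_eq_mul_inv]
    calc Valued.v (x ^ ℓ - A) * (γ (-(e:ℤ)))⁻¹ ≤ (γ (-(m':ℤ))) * (γ (-(e:ℤ)))⁻¹ :=
          mul_le_mul_left hfx _
      _ = (γ ((e:ℤ) - m')) := by
          rw [← WithZero.coe_inv, ← WithZero.coe_mul, ← ofAdd_neg, ← ofAdd_add]
          congr 1
          ring
  have hvt1 : Valued.v t < 1 := lt_of_le_of_lt hvt (by
    rw [← WithZero.coe_one, WithZero.coe_lt_coe, ← ofAdd_zero, Multiplicative.ofAdd_lt]
    linarith)
  have hvy : Valued.v (newton ℓ A x) = 1 := by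
    rw [hnewt, add_comm, Valued.v.map_add_eq_of_lt_right (by rw [hx]; exact hvt1), hx]
  refine ⟨by rwa [hnewt, add_sub_cancel_left], hvy, ?_⟩
  -- the key identity
  obtain ⟨n, rfl⟩ : ∃ n, ℓ = n + 1 := ⟨ℓ - 1, (Nat.succ_pred_eq_of_pos (by omega)).symm⟩
  have hDt : D * t = A - x ^ (n+1) := mul_div_cancel₀ _ hD0
  have hid : newton (n+1) A x ^ (n+1) - A
      = ∑ k ∈ range n, x ^ k * t ^ (n + 1 - k) * ((n+1).choose k : F) := by
    rw [hnewt, add_pow]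
    rw [Finset.sum_range_succ, Finset.sum_range_succ]
    have h1 : x ^ (n+1) * t ^ (n + 1 - (n+1)) * (((n+1).choose (n+1) : ℕ) : F) = x ^ (n+1) := by
      simp
    have h2 : x ^ n * t ^ (n + 1 - n) * (((n+1).choose n : ℕ) : F) = A - x ^ (n+1) := by
      rw [Nat.choose_succ_self_right]
      rw [← hDt, hD]
      have e1 : n + 1 - n = 1 := by omega
      have e2 : n + 1 - 1 = n := by omega
      rw [e1, e2]
      push_cast
      ring
    rw [h1, h2]
    ring
  rw [hid]
  -- bound each term
  apply Valued.v.map_sum_le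
  intro k hk
  rw [Finset.mem_range] at hk
  have hkl : k + 2 ≤ n + 1 := by omega
  rw [Valued.v.map_mul, Valued.v.map_mul, Valued.v.map_pow, hx, one_pow, one_mul,
    Valued.v.map_pow]
  have hpow : Valued.v t ^ (n + 1 - k) ≤ (γ (((n + 1 - k : ℕ) : ℤ) * ((e:ℤ) - m'))) := by
    calc Valued.v t ^ (n + 1 - k) ≤ (γ ((e:ℤ) - m')) ^ (n + 1 - k) := pow_le_pow_left' hvt _
      _ = (γ (((n + 1 - k : ℕ) : ℤ) * ((e:ℤ) - m'))) := by
          rw [← WithZero.coe_pow, ← ofAdd_nsmul, nsmul_eq_mul]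
  rcases Nat.eq_zero_or_pos k with rfl | hkpos
  · rw [Nat.choose_zero_right]
    push_cast
    rw [Valued.v.map_one, mul_one]
    refine le_trans hpow (gle ?_)
    have hc : ((n + 1 - 0 : ℕ) : ℤ) = (n:ℤ) + 1 := by push_cast; ring
    have f1' : (m':ℤ) + 1 ≤ ((n:ℤ) + 1) * ((m':ℤ) - e) := by push_cast at f1; linarith
    rw [hc]
    nlinarith [f1']
  · obtain ⟨d, hd⟩ := hℓ.dvd_choose_self (k := k) (by omega) (by omega) -- ℓ ∣ choose ℓ k
    have hvc : Valued.v (((n+1).choose k : ℕ) : F) ≤ (γ (-(e:ℤ))) := by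
      rw [hd, Nat.cast_mul, Valued.v.map_mul, hw]
      calc (γ (-(e:ℤ))) * Valued.v (d : F) ≤ (γ (-(e:ℤ))) * 1 := mul_le_mul_right (vnat d) _
        _ = (γ (-(e:ℤ))) := mul_one _
    calc Valued.v t ^ (n + 1 - k) * Valued.v (((n+1).choose k : ℕ) : F)
        ≤ (γ (((n + 1 - k : ℕ) : ℤ) * ((e:ℤ) - m'))) * (γ (-(e:ℤ))) :=
          mul_le_mul' hpow hvc
      _ = (γ ((((n + 1 - k : ℕ) : ℤ) * ((e:ℤ) - m')) + (-(e:ℤ)))) := by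
          rw [← WithZero.coe_mul, ← ofAdd_add]
      _ ≤ (γ (-((m':ℤ) + 1))) := by
          apply gle
          have h2kn : 2 ≤ n + 1 - k := by omega
          have h2k : (2 : ℤ) ≤ ((n + 1 - k : ℕ) : ℤ) := by exact_mod_cast h2kn
          nlinarith [hem]

open Filter in
theorem main_aux {F : Type*} [Field F] [Valued F ℤₘ₀] [CompleteSpace F]
    {ℓ e m : ℕ} (hℓ : ℓ.Prime) (hw : Valued.v (ℓ : F) = (γ (-(e:ℤ))))
    (hme : e * ℓ < m * (ℓ - 1)) {A a : F} (haval : Valued.v a = 1)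
    (hcong : Valued.v (a ^ ℓ - A) ≤ (γ (-(m:ℤ)))) :
    ∃ x : F, x ^ ℓ = A := by
  set u : ℕ → F := fun n => (newton ℓ A)^[n] a with hu
  have hmono : ∀ n : ℕ, e * ℓ < (m + n) * (ℓ - 1) := by
    intro n
    calc e * ℓ < m * (ℓ - 1) := hme
      _ ≤ (m + n) * (ℓ - 1) := Nat.mul_le_mul_right _ (Nat.le_add_right _ _)
  have hinv : ∀ n : ℕ, Valued.v (u n) = 1 ∧ Valued.v (u n ^ ℓ - A) ≤ (γ (-((m:ℤ) + n))) := by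
    intro n
    induction n with
    | zero => simpa using ⟨haval, hcong⟩
    | succ k ih =>
      have hs := step_aux hℓ hw A (hmono k) ih.1 (by
        convert ih.2 using 3 <;> push_cast <;> try ring)
      have : u (k+1) = newton ℓ A (u k) := Function.iterate_succ_apply' _ _ _
      rw [this]
      refine ⟨hs.2.1, ?_⟩
      convert hs.2.2 using 3 <;> push_cast <;> try ring
  have hdiff : ∀ n : ℕ, Valued.v (u (n+1) - u n) ≤ (γ ((e:ℤ) - (m + n))) := by
    intro n
    have hs := step_aux hℓ hw A (hmono n) (hinv n).1 (by
      convert (hinv n).2 using 3 <;> push_cast <;> try ring)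
    have : u (n+1) = newton ℓ A (u n) := Function.iterate_succ_apply' _ _ _
    rw [this]
    convert hs.1 using 3 <;> push_cast <;> try ring
  -- telescoping bound
  have htel : ∀ i j : ℕ, i ≤ j → Valued.v (u j - u i) ≤ (γ ((e:ℤ) - (m + i))) := by
    intro i j hij
    obtain ⟨c, rfl⟩ := Nat.exists_eq_add_of_le hij
    induction c with
    | zero => simp [Valued.v.map_zero]
    | succ p ihp =>
      have h1 : u (i + (p+1)) - u i = (u (i + p + 1) - u (i + p)) + (u (i + p) - u i) := by
        rw [← add_assoc]; ring
      rw [h1]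
      refine le_trans (Valued.v.map_add _ _) (max_le (le_trans (hdiff (i + p)) (gle ?_)) (ihp (by omega)))
      push_cast; omega
  have hcauchy : CauchySeq u := by
    rw [(Valued.hasBasis_uniformity F ℤₘ₀).cauchySeq_iff]
    rintro γ0 -
    have hne0 : (MonoidWithZeroHom.ValueGroup₀.embedding γ0.1 : ℤₘ₀) ≠ 0 := fun h =>
      γ0.ne_zero (MonoidWithZeroHom.ValueGroup₀.embedding_injective (h.trans (map_zero _).symm))
    obtain ⟨g, hg⟩ : ∃ g : Multiplicative ℤ,
        (MonoidWithZeroHom.ValueGroup₀.embedding γ0.1 : ℤₘ₀) = (g : ℤₘ₀) :=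
      ⟨(MonoidWithZeroHom.ValueGroup₀.embedding γ0.1).unzero hne0, by simp [WithZero.coe_unzero]⟩
    set N : ℕ := ((e : ℤ) - g.toAdd).toNat + 1 with hN
    refine ⟨N, fun p hp q hq => ?_⟩
    have key : ∀ r, N ≤ r → Valued.v (u r - u N) ≤ (γ ((e:ℤ) - (m + N))) := fun r hr => htel N r hr
    have h1 : Valued.v (u q - u p) ≤ (γ ((e:ℤ) - (m + N))) := by
      have : u q - u p = (u q - u N) + (u N - u p) := by ring
      rw [this]
      refine le_trans (Valued.v.map_add _ _) (max_le (key q hq) ?_)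
      rw [Valued.v.map_sub_swap]
      exact key p hp
    show Valued.v.restrict (u q - u p) < γ0.1
    rw [Valuation.restrict_lt_iff_lt_embedding]
    refine lt_of_le_of_lt h1 ?_
    rw [hg, WithZero.coe_lt_coe, ← Multiplicative.toAdd_lt]
    simp only [toAdd_ofAdd]
    have := Int.self_le_toNat ((e : ℤ) - g.toAdd)
    omega
  obtain ⟨L, hL⟩ := cauchySeq_tendsto_of_complete hcauchy
  refine ⟨L, ?_⟩
  have h2 : Tendsto (fun n => u n ^ ℓ) atTop (nhds (L ^ ℓ)) := hL.pow ℓ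
  have h3 : Tendsto (fun n => u n ^ ℓ) atTop (nhds A) := by
    rw [← tendsto_sub_nhds_zero_iff]
    rw [(Valued.hasBasis_nhds_zero F ℤₘ₀).tendsto_right_iff]
    rintro γ0 -
    have hne0 : (MonoidWithZeroHom.ValueGroup₀.embedding γ0.1 : ℤₘ₀) ≠ 0 := fun h =>
      γ0.ne_zero (MonoidWithZeroHom.ValueGroup₀.embedding_injective (h.trans (map_zero _).symm))
    obtain ⟨g, hg⟩ : ∃ g : Multiplicative ℤ,
        (MonoidWithZeroHom.ValueGroup₀.embedding γ0.1 : ℤₘ₀) = (g : ℤₘ₀) :=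
      ⟨(MonoidWithZeroHom.ValueGroup₀.embedding γ0.1).unzero hne0, by simp [WithZero.coe_unzero]⟩
    rw [eventually_atTop]
    refine ⟨(- g.toAdd).toNat + 1, fun n hn => ?_⟩
    show Valued.v.restrict (u n ^ ℓ - A) < γ0.1
    rw [Valuation.restrict_lt_iff_lt_embedding]
    refine lt_of_le_of_lt (hinv n).2 ?_
    rw [hg, WithZero.coe_lt_coe, ← Multiplicative.toAdd_lt]
    simp only [toAdd_ofAdd]
    have := Int.self_le_toNat (- g.toAdd)
    omega
  exact tendsto_nhds_unique h2 h3


/-- Let `ℓ` be a prime, `K` a number field, `v` a prime of `𝓞 K` dividing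
`ℓ 𝓞 K` with `e = ord_v(ℓ 𝓞 K)`, and `m` a positive integer with `m(ℓ − 1) > eℓ`.  If
`α, a ∈ 𝓞 K` with `a ∉ v` and `α ≡ a^ℓ (mod v^m)`, then `α` is an `ℓ`-th power in the
completion `K_v`. -/
theorem stmt_7 (ℓ : ℕ) (hℓ : ℓ.Prime) (K : Type*) [Field K] [NumberField K]
    (v : HeightOneSpectrum (𝓞 K)) (hv : ((ℓ : 𝓞 K)) ∈ v.asIdeal)
    (e : ℕ) (he : e = multiplicity v.asIdeal (Ideal.span {(ℓ : 𝓞 K)}))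
    (m : ℕ) (hm : 0 < m) (hme : e * ℓ < m * (ℓ - 1))
    (α a : 𝓞 K) (ha : a ∉ v.asIdeal) (hcong : α - a ^ ℓ ∈ v.asIdeal ^ m) :
    ∃ x : v.adicCompletion K, x ^ ℓ = algebraMap (𝓞 K) (v.adicCompletion K) α := by
  classical
  set F := v.adicCompletion K
  have hcoe : ∀ x : 𝓞 K, Valued.v (algebraMap (𝓞 K) F x) = v.intValuationDef x := by
    intro x
    have h : algebraMap (𝓞 K) F x = ((algebraMap (𝓞 K) K x : K) : F) := rfl
    rw [h, v.valuedAdicCompletion_eq_valuation' (algebraMap (𝓞 K) K x),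
      v.valuation_of_algebraMap, v.intValuation_apply]
  have hne : (ℓ : 𝓞 K) ≠ 0 := Nat.cast_ne_zero.mpr hℓ.ne_zero
  -- value of intValuation of ℓ
  set c : ℕ := (Associates.mk v.asIdeal).count (Associates.mk (Ideal.span {(ℓ : 𝓞 K)})).factors with hc
  have hval : v.intValuationDef (ℓ : 𝓞 K) = (γ (-(c:ℤ))) := by
    rw [v.intValuationDef_if_neg hne]
    rfl
  have hiff : ∀ n : ℕ, v.asIdeal ^ n ∣ Ideal.span {(ℓ : 𝓞 K)} ↔ n ≤ c := by
    intro n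
    rw [← v.intValuation_le_pow_iff_dvd, v.intValuation_apply, hval, WithZero.exp, WithZero.coe_le_coe, Multiplicative.ofAdd_le,
      neg_le_neg_iff, Int.ofNat_le]
  have hec : e = c := by
    have h1 : v.asIdeal ^ c ∣ Ideal.span {(ℓ : 𝓞 K)} := (hiff c).mpr le_rfl
    have h2 : ¬ v.asIdeal ^ (c+1) ∣ Ideal.span {(ℓ : 𝓞 K)} := fun h => by
      have := (hiff (c+1)).mp h; omega
    rw [he]
    exact multiplicity_eq_of_dvd_of_not_dvd h1 h2
  have hw : Valued.v ((ℓ : ℕ) : F) = (γ (-(e:ℤ))) := by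
    have h0 : ((ℓ : ℕ) : F) = algebraMap (𝓞 K) F ((ℓ : ℕ) : 𝓞 K) := by
      rw [map_natCast]
    rw [h0, hcoe, hval, hec]
  have haval : Valued.v (algebraMap (𝓞 K) F a : F) = 1 := by
    rw [hcoe]
    rcases lt_or_eq_of_le (v.intValuation_le_one a) with hlt | heq
    · exfalso
      apply ha
      rw [v.intValuation_lt_one_iff_dvd, Ideal.dvd_span_singleton] at hlt
      exact hlt
    · exact heq
  have hcong' : Valued.v ((algebraMap (𝓞 K) F a) ^ ℓ - algebraMap (𝓞 K) F α) ≤ (γ (-(m:ℤ))) := by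
    have h0 : (algebraMap (𝓞 K) F a) ^ ℓ - algebraMap (𝓞 K) F α
        = algebraMap (𝓞 K) F (a ^ ℓ - α) := by
      rw [(algebraMap (𝓞 K) F).map_sub, (algebraMap (𝓞 K) F).map_pow]
    rw [h0, hcoe]
    show v.intValuation (a ^ ℓ - α) ≤ WithZero.exp (-(m:ℤ))
    rw [v.intValuation_le_pow_iff_dvd, Ideal.dvd_span_singleton]
    rw [show a ^ ℓ - α = -(α - a ^ ℓ) by ring]
    exact neg_mem hcong
  exact main_aux hℓ hw hme haval hcong'
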